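/- Consider the birth-death kernel on ℕ given by R_x = λ_x δ_{x+1} + μ_x δ_{x-1} with μ_0 = 0, λ_0 > 0, positive rates, sup_x (λ_x + μ_x) = 1, inf_{x≥1} μ_x > 0, sup_x μ_x < ∞ and λ_x = o(μ_x) as x → ∞. Let c₁ = inf_x (λ_x + μ_x) > 0 and choose a > 0 with e^{-a} ≤ c₁/4, and set V(x) = e^{ax}. Then for all x ∈ ℕ, R_x · V ≤ (c₁/2) V(x) + K, where K = max over the finitely many y with (λ_y/μ_y) e^a + c₁/4 ≥ c₁/2 of V(y)((λ_y/μ_y)e^a + c₁/4) (and K = R_0·V for x = 0 handled separately). -/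

import Mathlib

open Real Filter

/-- Lyapunov inequality (A2-ii) for the quasi-ergodic birth-death kernel
`R_x = λ_x δ_{x+1} + μ_x δ_{x-1}` with `V(x) = e^{a x}`, `e^{-a} ≤ c₁/4`:
`R_x·V ≤ (c₁/2) V(x) + K` where `K` is the maximum over the finitely many bad
sites (the site `0` being handled separately). -/
theorem stmt_10 (lam mu : ℕ → ℝ) (c₁ a : ℝ)
    (hmu0 : mu 0 = 0) (hlam0 : 0 < lam 0)
    (hlam : ∀ x, 0 < lam x) (hmu : ∀ x : ℕ, 1 ≤ x → 0 < mu x)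
    (hmuinf : ∃ d > (0 : ℝ), ∀ x : ℕ, 1 ≤ x → d ≤ mu x)
    (hmusup : ∃ Mb : ℝ, ∀ x, mu x ≤ Mb)
    (hsum1 : ∀ x, lam x + mu x ≤ 1)
    (hlittleo : Tendsto (fun x : ℕ => lam x / mu x) atTop (nhds 0))
    (hc₁ : c₁ = ⨅ x : ℕ, (lam x + mu x)) (hc₁pos : 0 < c₁)
    (ha : 0 < a) (hea : Real.exp (-a) ≤ c₁ / 4) :
    ∀ x : ℕ,
      lam x * Real.exp (a * ((x : ℝ) + 1)) + mu x * Real.exp (a * ((x : ℝ) - 1)) ≤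
        c₁ / 2 * Real.exp (a * (x : ℝ)) +
          max (lam 0 * Real.exp a)
            (sSup ((fun y : ℕ =>
                Real.exp (a * (y : ℝ)) * (lam y / mu y * Real.exp a + c₁ / 4)) ''
              {y : ℕ | 1 ≤ y ∧ c₁ / 2 ≤ lam y / mu y * Real.exp a + c₁ / 4})) := by
  set f : ℕ → ℝ := fun y : ℕ =>
    Real.exp (a * (y : ℝ)) * (lam y / mu y * Real.exp a + c₁ / 4) with hf
  set S : Set ℕ := {y : ℕ | 1 ≤ y ∧ c₁ / 2 ≤ lam y / mu y * Real.exp a + c₁ / 4} with hS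
  set K : ℝ := max (lam 0 * Real.exp a) (sSup (f '' S)) with hK
  -- the bad set is finite, hence the image is bounded above
  have hbdd : BddAbove (f '' S) := by
    have hev : ∀ᶠ y in atTop, lam y / mu y < c₁ / 4 / Real.exp a :=
      hlittleo.eventually (eventually_lt_nhds (by positivity))
    obtain ⟨N, hN⟩ := eventually_atTop.mp hev
    have hsub : S ⊆ Set.Iio N := by
      intro y hy
      by_contra hcon
      simp only [Set.mem_Iio, not_lt] at hcon
      have h1 := hN y hcon
      have h2 : lam y / mu y * Real.exp a < c₁ / 4 := by
        rw [lt_div_iff₀ (Real.exp_pos a)] at h1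
        linarith
      have := hy.2
      linarith
    exact (((Set.finite_Iio N).subset hsub).image f).bddAbove
  have hKpos : 0 < K := lt_of_lt_of_le (by positivity) (le_max_left _ _)
  intro x
  rcases Nat.eq_zero_or_pos x with h0 | h1
  · subst h0
    simp only [hmu0, Nat.cast_zero, zero_mul, zero_add, mul_one, zero_mul, add_zero,
      mul_zero, Real.exp_zero]
    have : lam 0 * Real.exp a ≤ K := le_max_left _ _
    linarith
  · -- x ≥ 1
    have hmux : 0 < mu x := hmu x h1
    have hmu1 : mu x ≤ 1 := by have := hsum1 x; have := hlam x; linarith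
    have e1 : Real.exp (a * ((x : ℝ) + 1)) = Real.exp (a * x) * Real.exp a := by
      rw [← Real.exp_add]; ring_nf
    have e2 : Real.exp (a * ((x : ℝ) - 1)) = Real.exp (a * x) * Real.exp (-a) := by
      rw [← Real.exp_add]; ring_nf
    have hE : 0 < Real.exp (a * (x : ℝ)) := Real.exp_pos _
    have key : lam x * Real.exp (a * ((x : ℝ) + 1)) + mu x * Real.exp (a * ((x : ℝ) - 1))
        ≤ f x := by
      rw [e1, e2, hf]
      have hle : lam x ≤ lam x / mu x := by
        rw [le_div_iff₀ hmux]
        nlinarith [(hlam x).le]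
      have h2 : mu x * Real.exp (-a) ≤ c₁ / 4 := by
        nlinarith [Real.exp_pos (-a)]
      have hA := mul_le_mul_of_nonneg_right hle
        (mul_pos hE (Real.exp_pos a)).le
      have hB := mul_le_mul_of_nonneg_left h2 hE.le
      show lam x * (Real.exp (a * (x : ℝ)) * Real.exp a) +
          mu x * (Real.exp (a * (x : ℝ)) * Real.exp (-a)) ≤
          Real.exp (a * (x : ℝ)) * (lam x / mu x * Real.exp a + c₁ / 4)
      nlinarith [hA, hB]
    by_cases hx : c₁ / 2 ≤ lam x / mu x * Real.exp a + c₁ / 4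
    · have hmem : f x ∈ f '' S := ⟨x, ⟨h1, hx⟩, rfl⟩
      have : f x ≤ K := le_trans (le_csSup hbdd hmem) (le_max_right _ _)
      have hpos : 0 ≤ c₁ / 2 * Real.exp (a * (x : ℝ)) := by positivity
      linarith
    · push_neg at hx
      have : f x ≤ c₁ / 2 * Real.exp (a * (x : ℝ)) := by
        rw [hf]
        nlinarith
      linarith
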